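/- Let Ω ⊆ ℝ² be open, μ ≠ 0 and λ ∈ ℝ, let u : ℝ² → ℝ² be twice continuously differentiable on Ω, and let σ be a continuously differentiable 2×2 matrix field on Ω such that σ^r = μ·underline_curl(u) and curl(σ) = −λu on Ω. Define p := −(1/2)(σ:J). Then on Ω: −μ(Δu₁,Δu₂) + ∇p = λu and div(u) = 0; that is, the reduced stress–velocity system is equivalent to the Stokes eigenvalue system with the pressure recovered by p = −(1/2)(σ:J). -/

import Mathlib

/-- The matrix `J` with rows `(0, 1)` and `(-1, 0)`. -/
def J : Matrix (Fin 2) (Fin 2) ℝ := !![0, 1; -1, 0]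

/-- The Frobenius inner product `τ : σ = ∑ i j, τ i j * σ i j` of 2×2 real matrices. -/
def frob (τ σ : Matrix (Fin 2) (Fin 2) ℝ) : ℝ := ∑ i, ∑ j, τ i j * σ i j

/-- `τ^r := τ − (1/2)(τ:J)·J`. -/
noncomputable def taur (τ : Matrix (Fin 2) (Fin 2) ℝ) : Matrix (Fin 2) (Fin 2) ℝ :=
  τ - ((1 / 2) * frob τ J) • J

/-- Partial derivative `∂f/∂x_j` at `x` of a scalar field on `ℝ²`. -/
noncomputable def pd (f : (Fin 2 → ℝ) → ℝ) (x : Fin 2 → ℝ) (j : Fin 2) : ℝ :=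
  fderiv ℝ f x (Pi.single j 1)

/-- `underline_curl(u)`: the 2×2 matrix field whose `i`-th row is `(−∂uᵢ/∂x₂, ∂uᵢ/∂x₁)`. -/
noncomputable def ucurl (u : (Fin 2 → ℝ) → (Fin 2 → ℝ)) (x : Fin 2 → ℝ) :
    Matrix (Fin 2) (Fin 2) ℝ :=
  !![-pd (fun y => u y 0) x 1, pd (fun y => u y 0) x 0;
     -pd (fun y => u y 1) x 1, pd (fun y => u y 1) x 0]

/-- `curl(τ) := (∂τ₁₂/∂x₁ − ∂τ₁₁/∂x₂, ∂τ₂₂/∂x₁ − ∂τ₂₁/∂x₂)` of a 2×2 matrix field. -/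
noncomputable def mcurl (τ : (Fin 2 → ℝ) → Matrix (Fin 2) (Fin 2) ℝ) (x : Fin 2 → ℝ) :
    Fin 2 → ℝ :=
  ![pd (fun y => τ y 0 1) x 0 - pd (fun y => τ y 0 0) x 1,
    pd (fun y => τ y 1 1) x 0 - pd (fun y => τ y 1 0) x 1]

/-- `div(u) := ∂u₁/∂x₁ + ∂u₂/∂x₂`. -/
noncomputable def divg (u : (Fin 2 → ℝ) → (Fin 2 → ℝ)) (x : Fin 2 → ℝ) : ℝ :=
  pd (fun y => u y 0) x 0 + pd (fun y => u y 1) x 1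

/-- The Laplacian `Δf := ∂²f/∂x₁² + ∂²f/∂x₂²` of a scalar field on `ℝ²`. -/
noncomputable def lap (f : (Fin 2 → ℝ) → ℝ) (x : Fin 2 → ℝ) : ℝ :=
  pd (fun y => pd f y 0) x 0 + pd (fun y => pd f y 1) x 1


lemma frob_J (τ : Matrix (Fin 2) (Fin 2) ℝ) : frob τ J = τ 0 1 - τ 1 0 := by
  simp [frob, J, Fin.sum_univ_two]
  ring

lemma pd_congr {f g : (Fin 2 → ℝ) → ℝ} {x : Fin 2 → ℝ} (h : f =ᶠ[nhds x] g) (j : Fin 2) :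
    pd f x j = pd g x j := by
  unfold pd; rw [h.fderiv_eq]

lemma pd_lin {f g : (Fin 2 → ℝ) → ℝ} {x : Fin 2 → ℝ} (a b : ℝ)
    (hf : DifferentiableAt ℝ f x) (hg : DifferentiableAt ℝ g x) (j : Fin 2) :
    pd (fun y => a * f y + b * g y) x j = a * pd f x j + b * pd g x j := by
  unfold pd
  rw [fderiv_fun_add ((hf.const_mul a)) (hg.const_mul b), fderiv_const_mul hf, fderiv_const_mul hg]
  simp

lemma diff_pd {f : (Fin 2 → ℝ) → ℝ} {x : Fin 2 → ℝ} (hf : ContDiffAt ℝ 2 f x) (j : Fin 2) :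
    DifferentiableAt ℝ (fun y => pd f y j) x := by
  have h : ContDiffAt ℝ 1 (fderiv ℝ f) x := hf.fderiv_right (by norm_num)
  exact (h.differentiableAt one_ne_zero).clm_apply (differentiableAt_const _)

/-- If `σ^r = μ·underline_curl(u)` and `curl(σ) = −λu` on an open set `Ω`, with `μ ≠ 0`,
`u` of class `C²` and `σ` of class `C¹` on `Ω`, then `u` and the recovered pressure
`p := −(1/2)(σ:J)` solve the Stokes eigenvalue problem `−μΔu + ∇p = λu`, `div u = 0` on `Ω`. -/
theorem stress_velocity_to_stokes (Ω : Set (Fin 2 → ℝ)) (hΩ : IsOpen Ω) (μ lam : ℝ)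
    (hμ : μ ≠ 0)
    (u : (Fin 2 → ℝ) → (Fin 2 → ℝ)) (hu : ContDiffOn ℝ 2 u Ω)
    (σ : (Fin 2 → ℝ) → Matrix (Fin 2) (Fin 2) ℝ)
    (hσreg : ∀ i j, ContDiffOn ℝ 1 (fun y => σ y i j) Ω)
    (hσr : ∀ x ∈ Ω, taur (σ x) = μ • ucurl u x)
    (hcurl : ∀ x ∈ Ω, mcurl σ x = fun i => -lam * u x i) :
    ∀ x ∈ Ω,
      ((fun i => -μ * lap (fun y => u y i) x +
          pd (fun y => -(1 / 2) * frob (σ y) J) x i) = fun i => lam * u x i) ∧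
      divg u x = 0 := by
  intro x hx
  have hmem : Ω ∈ nhds x := hΩ.mem_nhds hx
  have hu0 : ContDiffOn ℝ 2 (fun y => u y 0) Ω := (contDiffOn_pi.mp hu) 0
  have hu1 : ContDiffOn ℝ 2 (fun y => u y 1) Ω := (contDiffOn_pi.mp hu) 1
  set P : (Fin 2 → ℝ) → ℝ := fun y => -(1 / 2) * frob (σ y) J with hPdef
  have hPeq : P = fun y => -(1 / 2) * (σ y 0 1 - σ y 1 0) := by
    funext y; simp only [hPdef, frob_J]
  have hPdiff : DifferentiableAt ℝ P x := by
    rw [hPeq]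
    exact ((((hσreg 0 1).contDiffAt hmem).differentiableAt one_ne_zero).sub
      (((hσreg 1 0).contDiffAt hmem).differentiableAt one_ne_zero)).const_mul _
  have hE : ∀ y ∈ Ω,
      σ y 0 0 = (-μ) * pd (fun z => u z 0) y 1 + (0 : ℝ) * P y ∧
      σ y 0 1 = μ * pd (fun z => u z 0) y 0 + (-1 : ℝ) * P y ∧
      σ y 1 0 = (-μ) * pd (fun z => u z 1) y 1 + (1 : ℝ) * P y ∧
      σ y 1 1 = μ * pd (fun z => u z 1) y 0 + (0 : ℝ) * P y := by
    intro y hy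
    have h := hσr y hy
    have h00 := congrFun (congrFun h 0) 0
    have h01 := congrFun (congrFun h 0) 1
    have h10 := congrFun (congrFun h 1) 0
    have h11 := congrFun (congrFun h 1) 1
    simp only [taur, Matrix.sub_apply, Matrix.smul_apply, smul_eq_mul, frob_J]
      at h00 h01 h10 h11
    simp [J, ucurl] at h00 h01 h10 h11
    refine ⟨?_, ?_, ?_, ?_⟩ <;> simp only [hPdef, frob_J] <;> linarith
  have hE00 : (fun y => σ y 0 0) =ᶠ[nhds x]
      (fun y => (-μ) * pd (fun z => u z 0) y 1 + (0 : ℝ) * P y) :=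
    Filter.eventuallyEq_of_mem hmem (fun y hy => (hE y hy).1)
  have hE01 : (fun y => σ y 0 1) =ᶠ[nhds x]
      (fun y => μ * pd (fun z => u z 0) y 0 + (-1 : ℝ) * P y) :=
    Filter.eventuallyEq_of_mem hmem (fun y hy => (hE y hy).2.1)
  have hE10 : (fun y => σ y 1 0) =ᶠ[nhds x]
      (fun y => (-μ) * pd (fun z => u z 1) y 1 + (1 : ℝ) * P y) :=
    Filter.eventuallyEq_of_mem hmem (fun y hy => (hE y hy).2.2.1)
  have hE11 : (fun y => σ y 1 1) =ᶠ[nhds x]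
      (fun y => μ * pd (fun z => u z 1) y 0 + (0 : ℝ) * P y) :=
    Filter.eventuallyEq_of_mem hmem (fun y hy => (hE y hy).2.2.2)
  have d00 : DifferentiableAt ℝ (fun y => pd (fun z => u z 0) y 0) x :=
    diff_pd (hu0.contDiffAt hmem) 0
  have d01 : DifferentiableAt ℝ (fun y => pd (fun z => u z 0) y 1) x :=
    diff_pd (hu0.contDiffAt hmem) 1
  have d10 : DifferentiableAt ℝ (fun y => pd (fun z => u z 1) y 0) x :=
    diff_pd (hu1.contDiffAt hmem) 0
  have d11 : DifferentiableAt ℝ (fun y => pd (fun z => u z 1) y 1) x :=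
    diff_pd (hu1.contDiffAt hmem) 1
  have k1 : pd (fun y => σ y 0 1) x 0 =
      μ * pd (fun y => pd (fun z => u z 0) y 0) x 0 + (-1 : ℝ) * pd P x 0 := by
    rw [pd_congr hE01 0]; exact pd_lin μ (-1) d00 hPdiff 0
  have k2 : pd (fun y => σ y 0 0) x 1 =
      (-μ) * pd (fun y => pd (fun z => u z 0) y 1) x 1 + (0 : ℝ) * pd P x 1 := by
    rw [pd_congr hE00 1]; exact pd_lin (-μ) 0 d01 hPdiff 1
  have k3 : pd (fun y => σ y 1 1) x 0 =
      μ * pd (fun y => pd (fun z => u z 1) y 0) x 0 + (0 : ℝ) * pd P x 0 := by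
    rw [pd_congr hE11 0]; exact pd_lin μ 0 d10 hPdiff 0
  have k4 : pd (fun y => σ y 1 0) x 1 =
      (-μ) * pd (fun y => pd (fun z => u z 1) y 1) x 1 + (1 : ℝ) * pd P x 1 := by
    rw [pd_congr hE10 1]; exact pd_lin (-μ) 1 d11 hPdiff 1
  have hc := hcurl x hx
  have hc0 := congrFun hc 0
  have hc1 := congrFun hc 1
  simp only [mcurl, Matrix.cons_val_zero, Matrix.cons_val_one, Matrix.head_cons] at hc0 hc1
  constructor
  · funext i
    fin_cases i
    · show -μ * lap (fun y => u y 0) x + pd P x 0 = lam * u x 0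
      simp only [lap]
      linarith [k1, k2, hc0]
    · show -μ * lap (fun y => u y 1) x + pd P x 1 = lam * u x 1
      simp only [lap]
      linarith [k3, k4, hc1]
  · have h1 := (hE x hx).2.1
    have h2 := (hE x hx).2.2.1
    have hPx : P x = -(1 / 2) * (σ x 0 1 - σ x 1 0) := by rw [hPeq]
    have hz : μ * (pd (fun z => u z 0) x 0 + pd (fun z => u z 1) x 1) = 0 := by linarith
    have := (mul_eq_zero.mp hz).resolve_left hμ
    simpa [divg] using this
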